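/- Let a > 1 and s ≥ 1 be integers, and for each n ≥ 1 let γ_n = Σ_{p prime, gcd(p,a)=1, h_a(p)=n} (ln p)^s / p. Then there is a constant C(a, s) > 0 such that Σ_{n ≤ z} γ_n ≤ C(a,s) (ln(z+2))^s for all real z ≥ 1. -/

import Mathlib

open Finset



/-- `(log x)^m ≤ (2m+2)^m √x` for `x ≥ 1`. -/
lemma aux_log_pow_le_sqrt (m : ℕ) {x : ℝ} (hx : 1 ≤ x) :
    (Real.log x) ^ m ≤ (2 * m + 2 : ℝ) ^ m * Real.sqrt x := by
  have hx0 : (0:ℝ) ≤ x := by linarith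
  have hd : (0:ℝ) < 2 * m + 2 := by positivity
  set ε : ℝ := 1 / (2 * m + 2) with hε
  have hεpos : 0 < ε := by positivity
  have h1 : Real.log x ≤ x ^ ε / ε := Real.log_le_rpow_div hx0 hεpos
  have hlog0 : 0 ≤ Real.log x := Real.log_nonneg hx
  have h2 : (Real.log x) ^ m ≤ (x ^ ε / ε) ^ m := pow_le_pow_left₀ hlog0 h1 m
  have h3 : (x ^ ε / ε) ^ m = (2 * m + 2 : ℝ) ^ m * (x ^ ε) ^ m := by
    rw [div_pow, hε]
    rw [one_div, inv_pow, div_inv_eq_mul]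
    ring
  have h4 : ((x ^ ε) ^ m : ℝ) = x ^ (ε * m) := by
    rw [← Real.rpow_natCast (x ^ ε) m, ← Real.rpow_mul hx0]
  have h5 : x ^ (ε * m) ≤ x ^ ((1:ℝ)/2) := by
    apply Real.rpow_le_rpow_of_exponent_le hx
    rw [hε]
    rw [div_mul_eq_mul_div, one_mul, div_le_div_iff₀ hd (by norm_num)]
    push_cast
    nlinarith [Nat.cast_nonneg (α := ℝ) m]
  have h6 : x ^ ((1:ℝ)/2) = Real.sqrt x := (Real.sqrt_eq_rpow x).symm
  calc (Real.log x) ^ m ≤ (x ^ ε / ε) ^ m := h2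
    _ = (2 * m + 2 : ℝ) ^ m * (x ^ ε) ^ m := h3
    _ = (2 * m + 2 : ℝ) ^ m * x ^ (ε * m) := by rw [h4]
    _ ≤ (2 * m + 2 : ℝ) ^ m * Real.sqrt x := by
        rw [← h6]; exact mul_le_mul_of_nonneg_left h5 (by positivity)

/-- Chebyshev-type bound from the primorial bound. -/
lemma aux_cheb (N : ℕ) :
    ∑ p ∈ (Finset.range (N+1)).filter Nat.Prime, Real.log p ≤ N * Real.log 4 := by
  have h0 : ∀ p ∈ (Finset.range (N+1)).filter Nat.Prime, ((p:ℝ)) ≠ 0 := by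
    intro p hp
    have h := (Finset.mem_filter.mp hp).2
    exact_mod_cast h.pos.ne'
  have h1 : ∑ p ∈ (Finset.range (N+1)).filter Nat.Prime, Real.log p
      = Real.log (primorial N) := by
    rw [primorial, Nat.cast_prod, Real.log_prod h0]
  rw [h1]
  have h2 : (primorial N : ℝ) ≤ (4:ℝ) ^ N := by
    exact_mod_cast Nat.cast_le.mpr (primorial_le_4_pow N)
  calc Real.log (primorial N) ≤ Real.log ((4:ℝ)^N) :=
        Real.log_le_log (by exact_mod_cast primorial_pos N) h2
    _ = N * Real.log 4 := by rw [Real.log_pow]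

lemma aux_mertens (k : ℕ) :
    ∑ p ∈ (Finset.range (2^k+1)).filter Nat.Prime, Real.log p / p
      ≤ k * (2 * Real.log 4) := by
  induction k with
  | zero =>
    have h : (Finset.range (2^0+1)).filter Nat.Prime = (∅ : Finset ℕ) := by decide
    rw [h]; simp
  | succ k ih =>
    have hle : 2^k + 1 ≤ 2^(k+1) + 1 := by
      have := Nat.pow_le_pow_right (by norm_num : 1 ≤ 2) (Nat.le_succ k)
      omega
    set f : ℕ → ℝ := fun p => if p.Prime then Real.log p / p else 0 with hf
    have hsum : ∀ N : ℕ, ∑ p ∈ (Finset.range (N+1)).filter Nat.Prime, Real.log p / p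
        = ∑ p ∈ Finset.range (N+1), f p := by
      intro N; rw [Finset.sum_filter]
    have hsplit : ∑ p ∈ Finset.range (2^(k+1)+1), f p
        = ∑ p ∈ Finset.range (2^k+1), f p + ∑ p ∈ Finset.Ico (2^k+1) (2^(k+1)+1), f p := by
      simp only [Finset.range_eq_Ico]
      exact (Finset.sum_Ico_consecutive f (Nat.zero_le _) hle).symm
    have hblock : ∑ p ∈ Finset.Ico (2^k+1) (2^(k+1)+1), f p ≤ 2 * Real.log 4 := by
      have h1 : ∀ p ∈ Finset.Ico (2^k+1) (2^(k+1)+1), f p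
          ≤ (if p.Prime then Real.log p else 0) / 2^k := by
        intro p hp
        rw [Finset.mem_Ico] at hp
        by_cases hprime : p.Prime
        · simp only [hf, if_pos hprime]
          apply div_le_div_of_nonneg_left _ (by positivity) _
          · exact Real.log_nonneg (by exact_mod_cast hprime.one_lt.le)
          · exact_mod_cast Nat.le_of_succ_le hp.1
        · simp [hf, hprime]
      have hsub : Finset.Ico (2^k+1) (2^(k+1)+1) ⊆ Finset.range (2^(k+1)+1) := by
        rw [Finset.range_eq_Ico]; exact Finset.Ico_subset_Ico (Nat.zero_le _) le_rfl
      have hnn : ∀ i ∈ Finset.range (2^(k+1)+1), i ∉ Finset.Ico (2^k+1) (2^(k+1)+1) →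
          (0:ℝ) ≤ (if i.Prime then Real.log i else 0) := by
        intro i _ _
        split
        · exact Real.log_nonneg (by exact_mod_cast (by assumption : Nat.Prime i).one_lt.le)
        · exact le_rfl
      have hcheb : ∑ p ∈ Finset.range (2^(k+1)+1), (if p.Prime then Real.log p else 0)
          ≤ 2^(k+1) * Real.log 4 := by
        rw [← Finset.sum_filter]
        exact_mod_cast aux_cheb (2^(k+1))
      calc ∑ p ∈ Finset.Ico (2^k+1) (2^(k+1)+1), f p
          ≤ ∑ p ∈ Finset.Ico (2^k+1) (2^(k+1)+1), (if p.Prime then Real.log p else 0) / 2^k :=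
            Finset.sum_le_sum h1
        _ = (∑ p ∈ Finset.Ico (2^k+1) (2^(k+1)+1), (if p.Prime then Real.log p else 0)) / 2^k := by
            rw [Finset.sum_div]
        _ ≤ ((2:ℝ)^(k+1) * Real.log 4) / 2^k := by
            gcongr
            exact le_trans (Finset.sum_le_sum_of_subset_of_nonneg hsub hnn) hcheb
        _ = 2 * Real.log 4 := by
            have h2k : ((2:ℝ)^k) ≠ 0 := by positivity
            field_simp
            ring
    rw [hsum] at ih ⊢
    rw [hsplit]
    push_cast
    linarith


lemma aux_dvd {a n p : ℕ} (ha : 1 < a) (hn : 1 ≤ n) (hp : p.Prime)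
    (ho : orderOf ((a : ZMod p)) = n) : p ∣ a ^ n - 1 := by
  have h1 : ((a : ZMod p)) ^ n = 1 := ho ▸ pow_orderOf_eq_one _
  have han : 1 ≤ a ^ n := Nat.one_le_pow _ _ (by omega)
  have h2 : ((a ^ n - 1 : ℕ) : ZMod p) = 0 := by
    rw [Nat.cast_sub han]
    push_cast
    rw [h1]
    ring
  exact (ZMod.natCast_eq_zero_iff _ _).mp h2

lemma aux_lt {a n p : ℕ} (ha : 1 < a) (hn : 1 ≤ n) (hp : p.Prime)
    (ho : orderOf ((a : ZMod p)) = n) : p < a ^ n := by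
  have h1 := aux_dvd ha hn hp ho
  have h2 : 2 ≤ a ^ n := le_trans ha (Nat.le_self_pow (by omega) a)
  have := Nat.le_of_dvd (by omega) h1
  omega

open Classical in
noncomputable def Qn (a n : ℕ) : Finset ℕ :=
  (Finset.range (a ^ n)).filter
    (fun p => p.Prime ∧ Nat.Coprime p a ∧ orderOf ((a : ZMod p)) = n)

open Classical in
lemma Qn_mem {a n p : ℕ} :
    p ∈ Qn a n ↔ p < a ^ n ∧ (p.Prime ∧ Nat.Coprime p a ∧ orderOf ((a : ZMod p)) = n) := by
  simp [Qn, Finset.mem_filter, Finset.mem_range]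

lemma aux_tsum (a s n : ℕ) (ha : 1 < a) (hn : 1 ≤ n) :
    (∑' p : {p : ℕ // p.Prime ∧ Nat.Coprime p a ∧ orderOf ((a : ZMod p)) = n},
      (Real.log (p : ℕ)) ^ s / ((p : ℕ) : ℝ))
    = ∑ p ∈ Qn a n, (Real.log p) ^ s / p := by
  set f : ℕ → ℝ := fun p => (Real.log p) ^ s / p with hfdef
  have hset : {p : ℕ | p.Prime ∧ Nat.Coprime p a ∧ orderOf ((a : ZMod p)) = n}
      = (↑(Qn a n) : Set ℕ) := by
    ext p
    simp only [Set.mem_setOf_eq, Finset.mem_coe, Qn_mem]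
    constructor
    · intro h; exact ⟨aux_lt ha hn h.1 h.2.2, h⟩
    · intro h; exact h.2
  have h1 : (∑' p : {p : ℕ // p.Prime ∧ Nat.Coprime p a ∧ orderOf ((a : ZMod p)) = n}, f p)
      = ∑' p : ℕ,
        Set.indicator {p : ℕ | p.Prime ∧ Nat.Coprime p a ∧ orderOf ((a : ZMod p)) = n} f p :=
    tsum_subtype _ f
  rw [h1, hset]
  rw [tsum_eq_sum (s := Qn a n)
    (fun b hb => Set.indicator_of_notMem (by simpa using hb) f)]
  exact Finset.sum_congr rfl fun p hp => Set.indicator_of_mem (by simpa using hp) f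

set_option maxHeartbeats 1000000 in
theorem stmt_19 (a s : ℕ) (ha : 1 < a) (hs : 1 ≤ s) :
    ∃ C : ℝ, 0 < C ∧ ∀ z : ℝ, 1 ≤ z →
      ∑ n ∈ Finset.Icc 1 ⌊z⌋₊,
        (∑' p : {p : ℕ // p.Prime ∧ Nat.Coprime p a ∧ orderOf ((a : ZMod p)) = n},
          (Real.log (p : ℕ)) ^ s / ((p : ℕ) : ℝ))
        ≤ C * (Real.log (z + 2)) ^ s := by
  classical
  set cs : ℝ := (2 * (s:ℝ) + 2) ^ s with hcsdef
  have hcs : 0 < cs := by positivity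
  have hlog2 : 0 < Real.log 2 := Real.log_pos (by norm_num)
  have hlog4 : 0 < Real.log 4 := Real.log_pos (by norm_num)
  have hloga : 0 ≤ Real.log a := Real.log_nonneg (by exact_mod_cast ha.le)
  refine ⟨2 * Real.log 4 * 10 ^ s + cs * Real.log a / Real.log 2 + 1, ?_, ?_⟩
  · have h2 : 0 ≤ cs * Real.log a / Real.log 2 :=
      div_nonneg (mul_nonneg hcs.le hloga) hlog2.le
    have h3 : (0:ℝ) < 10 ^ s := by positivity
    nlinarith
  intro z hz
  set m := ⌊z⌋₊ with hm
  have hm1 : 1 ≤ m := Nat.le_floor (by exact_mod_cast hz)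
  have hmz : (m:ℝ) ≤ z := Nat.floor_le (by linarith)
  set L := Nat.log 2 ⌈z⌉₊ with hL
  set k := 4 * (L + 1) with hk
  set T := 2 ^ k with hT
  -- z^4 < T
  have hzT : z ^ 4 < (T:ℝ) := by
    have h1 : (⌈z⌉₊ : ℕ) < 2 ^ (L+1) := Nat.lt_pow_succ_log_self (by norm_num) _
    have h2 : z < ((2:ℝ)) ^ (L+1) := lt_of_le_of_lt (Nat.le_ceil z) (by exact_mod_cast h1)
    calc z^4 < ((2:ℝ)^(L+1))^4 := by
          apply pow_lt_pow_left₀ h2 (by linarith) (by norm_num)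
      _ = (T:ℝ) := by rw [hT, hk]; push_cast; rw [← pow_mul]; ring_nf
  -- 1 ≤ log (z+2)
  have hW1 : 1 ≤ Real.log (z+2) := by
    have he : Real.exp 1 ≤ z + 2 := by
      have := Real.exp_one_lt_d9; linarith
    calc (1:ℝ) = Real.log (Real.exp 1) := (Real.log_exp 1).symm
      _ ≤ Real.log (z+2) := Real.log_le_log (Real.exp_pos 1) he
  -- k ≤ 10 log (z+2)
  have hkW : (k:ℝ) ≤ 10 * Real.log (z+2) := by
    have hc0 : ⌈z⌉₊ ≠ 0 := by
      have : (1:ℕ) ≤ ⌈z⌉₊ := Nat.one_le_ceil_iff.mpr (by linarith)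
      omega
    have h1 : (2:ℕ)^L ≤ ⌈z⌉₊ := Nat.pow_log_le_self 2 hc0
    have h2 : ((2:ℝ))^L ≤ z + 2 := by
      have hceil : (⌈z⌉₊:ℝ) < z + 1 := Nat.ceil_lt_add_one (by linarith)
      calc ((2:ℝ))^L ≤ (⌈z⌉₊:ℝ) := by exact_mod_cast h1
        _ ≤ z + 2 := by linarith
    have h3 : (L:ℝ) * Real.log 2 ≤ Real.log (z+2) := by
      calc (L:ℝ) * Real.log 2 = Real.log ((2:ℝ)^L) := by rw [Real.log_pow]
        _ ≤ Real.log (z+2) := Real.log_le_log (by positivity) h2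
    have hlog2' : (0.6931:ℝ) < Real.log 2 := by
      have := Real.log_two_gt_d9; linarith
    have hL0 : (0:ℝ) ≤ L := Nat.cast_nonneg L
    have h4 : (0.6931:ℝ) * L ≤ Real.log (z+2) := by nlinarith
    have h5 : (k:ℝ) = 4 * L + 4 := by rw [hk]; push_cast; ring
    rw [h5]
    nlinarith
  -- the big union
  set QQ := (Finset.Icc 1 m).biUnion (fun n => Qn a n) with hQQ
  set g : ℕ → ℝ := fun p => (Real.log p) ^ s / p with hgdef
  have hgnn : ∀ p : ℕ, 0 ≤ g p := by
    intro p
    have := Real.log_natCast_nonneg p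
    positivity
  have hdisj : (↑(Finset.Icc 1 m) : Set ℕ).PairwiseDisjoint (fun n => Qn a n) := by
    intro x hx y hy hxy
    simp only [Function.onFun]
    rw [Finset.disjoint_left]
    intro p hpx hpy
    exact hxy ((Qn_mem.mp hpx).2.2.2 ▸ (Qn_mem.mp hpy).2.2.2)
  have hLHS : ∑ n ∈ Finset.Icc 1 m,
        (∑' p : {p : ℕ // p.Prime ∧ Nat.Coprime p a ∧ orderOf ((a : ZMod p)) = n},
          (Real.log (p : ℕ)) ^ s / ((p : ℕ) : ℝ))
      = ∑ p ∈ QQ, g p := by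
    rw [hQQ, Finset.sum_biUnion hdisj]
    exact Finset.sum_congr rfl fun n hn => aux_tsum a s n ha (Finset.mem_Icc.mp hn).1
  -- membership facts
  set PP := ∏ n ∈ Finset.Icc 1 m, (a ^ n - 1) with hPP
  have hQQmem : ∀ p ∈ QQ, p.Prime ∧ p ∣ PP := by
    intro p hp
    rw [hQQ, Finset.mem_biUnion] at hp
    obtain ⟨n, hn, hpn⟩ := hp
    obtain ⟨-, hprime, -, ho⟩ := Qn_mem.mp hpn
    exact ⟨hprime, dvd_trans (aux_dvd ha (Finset.mem_Icc.mp hn).1 hprime ho)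
      (Finset.dvd_prod_of_mem _ hn)⟩
  have hPPle : PP ≤ a ^ (m * m) := by
    have h1 : PP ≤ ∏ n ∈ Finset.Icc 1 m, a ^ n :=
      Finset.prod_le_prod' fun n _ => Nat.sub_le _ _
    have h2 : ∏ n ∈ Finset.Icc 1 m, a ^ n = a ^ (∑ n ∈ Finset.Icc 1 m, n) :=
      Finset.prod_pow_eq_pow_sum _ _ _
    have h3 : (∑ n ∈ Finset.Icc 1 m, n) ≤ m * m := by
      calc (∑ n ∈ Finset.Icc 1 m, n) ≤ ∑ _n ∈ Finset.Icc 1 m, m :=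
            Finset.sum_le_sum fun n hn => (Finset.mem_Icc.mp hn).2
        _ = m * m := by rw [Finset.sum_const, Nat.card_Icc, smul_eq_mul, Nat.add_sub_cancel]
    calc PP ≤ a ^ (∑ n ∈ Finset.Icc 1 m, n) := h2 ▸ h1
      _ ≤ a ^ (m * m) := Nat.pow_le_pow_right (by omega) h3
  have hsumlog : ∑ p ∈ QQ, Real.log p ≤ z^2 * Real.log a := by
    have hdvd : (∏ p ∈ QQ, p) ∣ PP :=
      Finset.prod_primes_dvd PP (fun p hp => (hQQmem p hp).1.prime) (fun p hp => (hQQmem p hp).2)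
    have hPPpos : 0 < PP := by
      rw [hPP]
      apply Finset.prod_pos
      intro n hn
      have h2 : 2 ≤ a ^ n := le_trans ha (Nat.le_self_pow (by
        have := (Finset.mem_Icc.mp hn).1; omega) a)
      omega
    have hprodpos : 0 < ∏ p ∈ QQ, p := Finset.prod_pos fun p hp => (hQQmem p hp).1.pos
    have h1 : (∏ p ∈ QQ, p) ≤ a ^ (m*m) := le_trans (Nat.le_of_dvd hPPpos hdvd) hPPle
    have h2 : ∑ p ∈ QQ, Real.log p = Real.log ((∏ p ∈ QQ, p : ℕ) : ℝ) := by
      rw [Nat.cast_prod, Real.log_prod]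
      intro p hp
      exact_mod_cast (hQQmem p hp).1.pos.ne'
    rw [h2]
    calc Real.log ((∏ p ∈ QQ, p : ℕ) : ℝ) ≤ Real.log ((a:ℝ) ^ (m*m)) := by
          apply Real.log_le_log (by exact_mod_cast hprodpos)
          exact_mod_cast h1
      _ = ((m*m : ℕ) : ℝ) * Real.log a := by rw [Real.log_pow]
      _ ≤ z^2 * Real.log a := by
          have : ((m*m:ℕ):ℝ) ≤ z^2 := by push_cast; nlinarith [Nat.cast_nonneg (α := ℝ) m]
          nlinarith
  -- main bound
  have key : ∑ p ∈ QQ, g p ≤ 2*Real.log 4 * (k:ℝ)^s + cs * Real.log a / Real.log 2 := by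
    rw [← Finset.sum_filter_add_sum_filter_not QQ (fun p => p ≤ T) g]
    have hsmall : ∑ p ∈ QQ.filter (fun p => p ≤ T), g p ≤ 2*Real.log 4 * (k:ℝ)^s := by
      have hstep : ∀ p ∈ QQ.filter (fun p => p ≤ T), g p ≤ (k:ℝ)^(s-1) * (Real.log p / p) := by
        intro p hp
        rw [Finset.mem_filter] at hp
        have hprime := (hQQmem p hp.1).1
        have hp2 : (2:ℝ) ≤ p := by exact_mod_cast hprime.two_le
        have hlp : Real.log p ≤ (k:ℝ) := by
          have hlog2'' : Real.log 2 ≤ 1 := by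
            have := Real.log_two_lt_d9; linarith
          calc Real.log p ≤ Real.log (T:ℝ) := by
                apply Real.log_le_log (by linarith)
                exact_mod_cast hp.2
            _ = (k:ℝ) * Real.log 2 := by
                rw [hT]; push_cast; rw [Real.log_pow]
            _ ≤ (k:ℝ) * 1 := by
                apply mul_le_mul_of_nonneg_left hlog2'' (Nat.cast_nonneg k)
            _ = (k:ℝ) := mul_one _
        have hlp0 : 0 ≤ Real.log p := Real.log_natCast_nonneg p
        have hsplit : (Real.log p)^s = (Real.log p)^(s-1) * Real.log p := by
          conv_lhs => rw [← Nat.sub_add_cancel hs]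
          rw [pow_succ]
        have hpow : (Real.log p)^(s-1) ≤ (k:ℝ)^(s-1) := pow_le_pow_left₀ hlp0 hlp _
        show (Real.log p)^s / p ≤ (k:ℝ)^(s-1) * (Real.log p / p)
        rw [hsplit]
        rw [mul_div_assoc]
        apply mul_le_mul_of_nonneg_right hpow
        positivity
      have hsub : QQ.filter (fun p => p ≤ T) ⊆ (Finset.range (T+1)).filter Nat.Prime := by
        intro p hp
        rw [Finset.mem_filter] at hp ⊢
        exact ⟨Finset.mem_range.mpr (by omega), (hQQmem p hp.1).1⟩
      have hnn : ∀ p ∈ (Finset.range (T+1)).filter Nat.Prime,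
          p ∉ QQ.filter (fun p => p ≤ T) → (0:ℝ) ≤ Real.log p / p := by
        intro p _ _
        have := Real.log_natCast_nonneg p
        positivity
      calc ∑ p ∈ QQ.filter (fun p => p ≤ T), g p
          ≤ ∑ p ∈ QQ.filter (fun p => p ≤ T), (k:ℝ)^(s-1) * (Real.log p / p) :=
            Finset.sum_le_sum hstep
        _ = (k:ℝ)^(s-1) * ∑ p ∈ QQ.filter (fun p => p ≤ T), Real.log p / p := by
            rw [Finset.mul_sum]
        _ ≤ (k:ℝ)^(s-1) * ∑ p ∈ (Finset.range (T+1)).filter Nat.Prime, Real.log p / p := by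
            apply mul_le_mul_of_nonneg_left
              (Finset.sum_le_sum_of_subset_of_nonneg hsub hnn) (by positivity)
        _ ≤ (k:ℝ)^(s-1) * ((k:ℝ) * (2*Real.log 4)) := by
            apply mul_le_mul_of_nonneg_left _ (by positivity)
            rw [hT]
            exact aux_mertens k
        _ = 2*Real.log 4 * (k:ℝ)^s := by
            conv_rhs => rw [← Nat.sub_add_cancel hs]
            rw [pow_succ]; ring
    have hlarge : ∑ p ∈ QQ.filter (fun p => ¬ p ≤ T), g p ≤ cs * Real.log a / Real.log 2 := by
      have hz20 : (0:ℝ) < z^2 := by nlinarith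
      have hstep : ∀ p ∈ QQ.filter (fun p => ¬ p ≤ T), g p
          ≤ cs / (z^2 * Real.log 2) * Real.log p := by
        intro p hp
        rw [Finset.mem_filter] at hp
        have hprime := (hQQmem p hp.1).1
        have hp2 : (2:ℝ) ≤ p := by exact_mod_cast hprime.two_le
        have hpT : (T:ℝ) < p := by exact_mod_cast not_le.mp hp.2
        have hppos : (0:ℝ) < p := by linarith
        have hsq : z^2 ≤ Real.sqrt p := by
          have h1 : z^4 ≤ (p:ℝ) := le_of_lt (lt_trans hzT hpT)
          calc z^2 = Real.sqrt (z^4) := by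
                rw [show z^4 = (z^2)^2 by ring, Real.sqrt_sq (by positivity)]
            _ ≤ Real.sqrt p := Real.sqrt_le_sqrt h1
        have hsqpos : (0:ℝ) < Real.sqrt p := by positivity
        have hgp : g p ≤ cs / Real.sqrt p := by
          have h1 : (Real.log p)^s ≤ cs * Real.sqrt p :=
            aux_log_pow_le_sqrt s (by linarith : (1:ℝ) ≤ (p:ℝ))
          show (Real.log p)^s / p ≤ cs / Real.sqrt p
          calc (Real.log p)^s / p ≤ cs * Real.sqrt p / p := by gcongr
            _ = cs / Real.sqrt p := by
                rw [div_eq_div_iff hppos.ne' hsqpos.ne', mul_assoc,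
                  Real.mul_self_sqrt hppos.le]
        have h2 : cs / Real.sqrt p ≤ cs / z^2 := by
          rw [div_le_div_iff₀ hsqpos hz20]
          nlinarith
        have h3 : (1:ℝ) ≤ Real.log p / Real.log 2 := by
          rw [le_div_iff₀ hlog2, one_mul]
          exact Real.log_le_log (by norm_num) hp2
        calc g p ≤ cs / z^2 := le_trans hgp h2
          _ ≤ cs / z^2 * (Real.log p / Real.log 2) :=
              le_mul_of_one_le_right (by positivity) h3
          _ = cs / (z^2 * Real.log 2) * Real.log p := by ring
      calc ∑ p ∈ QQ.filter (fun p => ¬ p ≤ T), g p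
          ≤ ∑ p ∈ QQ.filter (fun p => ¬ p ≤ T), cs / (z^2 * Real.log 2) * Real.log p :=
            Finset.sum_le_sum hstep
        _ = cs / (z^2 * Real.log 2) * ∑ p ∈ QQ.filter (fun p => ¬ p ≤ T), Real.log p := by
            rw [Finset.mul_sum]
        _ ≤ cs / (z^2 * Real.log 2) * ∑ p ∈ QQ, Real.log p := by
            apply mul_le_mul_of_nonneg_left _ (by positivity)
            exact Finset.sum_le_sum_of_subset_of_nonneg (Finset.filter_subset _ _)
              (fun p _ _ => Real.log_natCast_nonneg p)
        _ ≤ cs / (z^2 * Real.log 2) * (z^2 * Real.log a) :=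
            mul_le_mul_of_nonneg_left hsumlog (by positivity)
        _ = cs * Real.log a / Real.log 2 := by
            have hzne : z^2 ≠ 0 := ne_of_gt hz20
            have hr : cs / (z^2 * Real.log 2) * (z^2 * Real.log a)
                = (z^2/z^2) * (cs * Real.log a / Real.log 2) := by ring
            rw [hr, div_self hzne, one_mul]
    linarith
  rw [hLHS]
  have hk0 : (0:ℝ) ≤ k := Nat.cast_nonneg k
  have hkpow : (k:ℝ)^s ≤ 10^s * (Real.log (z+2))^s := by
    calc (k:ℝ)^s ≤ (10 * Real.log (z+2))^s := pow_le_pow_left₀ hk0 hkW s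
      _ = 10^s * (Real.log (z+2))^s := mul_pow _ _ _
  have hWs : (1:ℝ) ≤ (Real.log (z+2))^s := by simpa using pow_le_pow_left₀ zero_le_one hW1 s
  have hB : 0 ≤ cs * Real.log a / Real.log 2 :=
    div_nonneg (mul_nonneg hcs.le hloga) hlog2.le
  calc ∑ p ∈ QQ, g p ≤ 2*Real.log 4 * (k:ℝ)^s + cs * Real.log a / Real.log 2 := key
    _ ≤ 2*Real.log 4 * (10^s * (Real.log (z+2))^s)
        + cs * Real.log a / Real.log 2 * (Real.log (z+2))^s := by
        have := mul_le_mul_of_nonneg_left hkpow (by positivity : (0:ℝ) ≤ 2*Real.log 4)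
        nlinarith
    _ = (2 * Real.log 4 * 10 ^ s + cs * Real.log a / Real.log 2) * (Real.log (z+2))^s := by
        ring
    _ ≤ (2 * Real.log 4 * 10 ^ s + cs * Real.log a / Real.log 2 + 1) * (Real.log (z+2))^s := by
        apply mul_le_mul_of_nonneg_right _ (by positivity)
        linarith
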